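/- Let $u_1, u_2$ be bounded continuous real functions on $\mathbb{T}^d$, $\varepsilon>0$, and $\lambda>0$ with $\lambda\|u_i\|_\infty < \varepsilon$ for $i=1,2$, and assume $u_1 > u_2$ pointwise on $\mathbb{T}^d$. If $a_1 + \varepsilon < a_2 - \varepsilon$ for real numbers $a_1, a_2$, then from $\lambda u_1(x) + F[u_1](x) < a_1 + \varepsilon$ and $\lambda u_2(x) + F[u_2](x) > a_2 - \varepsilon$ for an operator $F$ satisfying a comparison principle (sub $\le$ super for the equation $\lambda u + F[u] = g$ with common right-hand side), one deduces a contradiction; consequently, if there exist a continuous subsolution of $F[u]=a_1$ and a continuous supersolution of $F[u]=a_2$ on $\mathbb{T}^d$, then $a_2 \le a_1$. -/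
import Mathlib


noncomputable section

/-- The flat `d`-dimensional torus `ℝ^d / ℤ^d`. -/
abbrev Torus (d : ℕ) := Fin d → AddCircle (1 : ℝ)

theorem stmt19 {d : ℕ} (F : (Torus d → ℝ) → Torus d → ℝ)
    -- F commutes with addition of constants (as for -𝓘u + H(x, Du))
    (htrans : ∀ (u : Torus d → ℝ) (c : ℝ), F (fun x => u x + c) = F u)
    -- comparison principle for the discounted equation λu + F[u] = g
    (hcomp : ∀ lam : ℝ, 0 < lam → ∀ u v g : Torus d → ℝ,
      Continuous u → Continuous v →
      (∀ x, lam * u x + F u x ≤ g x) → (∀ x, g x ≤ lam * v x + F v x) →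
      ∀ x, u x ≤ v x)
    (a₁ a₂ : ℝ) (u₁ u₂ : Torus d → ℝ)
    (h₁c : Continuous u₁) (h₂c : Continuous u₂)
    -- u₁ is a subsolution of F[u] = a₁, u₂ a supersolution of F[u] = a₂
    (h₁ : ∀ x, F u₁ x ≤ a₁) (h₂ : ∀ x, a₂ ≤ F u₂ x) :
    a₂ ≤ a₁ := by
  by_contra hlt
  push_neg at hlt
  set ε : ℝ := (a₂ - a₁) / 4 with hε
  have hεpos : 0 < ε := by simp [hε]; linarith
  -- choose C so that u₁ + C > u₂
  obtain ⟨x₀, -, hx₀⟩ := isCompact_univ.exists_isMaxOn Set.univ_nonempty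
    ((h₂c.sub h₁c).continuousOn)
  set C : ℝ := u₂ x₀ - u₁ x₀ + 1 with hC
  set w : Torus d → ℝ := fun x => u₁ x + C with hwdef
  have hwc : Continuous w := h₁c.add continuous_const
  have hw : ∀ x, u₂ x < w x := by
    intro x
    have h : u₂ x - u₁ x ≤ u₂ x₀ - u₁ x₀ := hx₀ (Set.mem_univ x)
    simp only [hwdef, hC] at *
    linarith
  have hFw : F w = F u₁ := htrans u₁ C
  -- bound |w| + |u₂|
  obtain ⟨x₁, -, hx₁⟩ := isCompact_univ.exists_isMaxOn Set.univ_nonempty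
    ((hwc.abs.add h₂c.abs).continuousOn)
  set B : ℝ := |w x₁| + |u₂ x₁| + 1 with hB
  have hBpos : 0 < B := by positivity
  have hbw : ∀ x, |w x| ≤ B := by
    intro x
    have h : |w x| + |u₂ x| ≤ |w x₁| + |u₂ x₁| := hx₁ (Set.mem_univ x)
    have := abs_nonneg (u₂ x)
    simp only [hB]; linarith
  have hbu : ∀ x, |u₂ x| ≤ B := by
    intro x
    have h : |w x| + |u₂ x| ≤ |w x₁| + |u₂ x₁| := hx₁ (Set.mem_univ x)
    have := abs_nonneg (w x)
    simp only [hB]; linarith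
  set lam : ℝ := ε / B with hlam
  have hlampos : 0 < lam := div_pos hεpos hBpos
  have hlamB : lam * B = ε := div_mul_cancel₀ ε hBpos.ne'
  have hsub : ∀ x, lam * w x + F w x ≤ a₁ + ε := by
    intro x
    have h1 : lam * w x ≤ lam * B := by
      have := (le_abs_self (w x)).trans (hbw x)
      exact mul_le_mul_of_nonneg_left this hlampos.le
    have := h₁ x
    rw [hFw]
    linarith [hlamB]
  have hsup : ∀ x, a₂ - ε ≤ lam * u₂ x + F u₂ x := by
    intro x
    have h1 : -(lam * B) ≤ lam * u₂ x := by
      have := (neg_abs_le (u₂ x))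
      have h2 : lam * (-(B)) ≤ lam * u₂ x := by
        apply mul_le_mul_of_nonneg_left _ hlampos.le
        have := (abs_le.mp (hbu x)).1
        linarith
      linarith [h2]
    have := h₂ x
    linarith [hlamB]
  have hmid : a₁ + ε ≤ a₂ - ε := by simp only [hε]; linarith
  have hcomp' := hcomp lam hlampos w u₂ (fun _ => a₁ + ε) hwc h₂c
    hsub (fun x => hmid.trans (hsup x))
  exact absurd (hcomp' x₀) (not_le.mpr (hw x₀))
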